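/- Let η > 0, γ > 0, r₀ ≥ γ, t, T ∈ ℝ, x > 0 and μ̄ > 0. Set α := ((γ+η)/γ)·e^{η(t−T)}, β := (r₀ − γ + γα)·x/(γμ̄), m := (γα/(r₀−γ+γα) − 1)·μ̄, and let p(a) := (β^α/Γ(α))·(1+a)^{α−1}·e^{−β(1+a)} for a > −1 be the density of the shifted Gamma policy Gamma(α, β) − 1. For a > −1 define q(a) := γα(log x − log μ̄) + (γα − γ)·log(1+a) − r₀(x/μ̄)(1+a) − ((γα−γ)/μ̄)·m − (1 + log γ)·γα + γ − γ·log Γ(α) + γα·log(γα + r₀ − γ). Then ∫_{−1}^{∞} ( q(a) − γ·log p(a) ) · p(a) da = 0. (This is the MFC consistency condition ∫(q_d^{MFC,*}(t,x,μ,a,π^{MFC,*}) − γ log π^{MFC,*}(a|t,x,μ)) π^{MFC,*}(a|t,x,μ) da = 0 for the paper's explicit decoupled Iq-function, where m equals the evaluated population term E_{μ,π^{MFC,*}}[ξ a^{π^{MFC,*}}].) -/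

import Mathlib

open MeasureTheory Real

lemma shift_Ioi (f : ℝ → ℝ) : ∫ a in Set.Ioi (-1:ℝ), f (1 + a) = ∫ z in Set.Ioi (0:ℝ), f z := by
  have h := (measurePreserving_add_left (volume : Measure ℝ) 1).setIntegral_preimage_emb
    (MeasurableEquiv.addLeft (1:ℝ)).measurableEmbedding f (Set.Ioi (0:ℝ))
  have hs : (fun a => 1 + a) ⁻¹' Set.Ioi (0:ℝ) = Set.Ioi (-1:ℝ) := by
    ext a; simp [neg_lt]
  simpa [hs] using h

lemma shift_intble (f : ℝ → ℝ) (hf : IntegrableOn f (Set.Ioi (0:ℝ))) :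
    IntegrableOn (fun a => f (1 + a)) (Set.Ioi (-1:ℝ)) := by
  have h := (MeasurePreserving.integrableOn_comp_preimage
    (measurePreserving_add_left (volume : Measure ℝ) 1)
    (MeasurableEquiv.addLeft (1:ℝ)).measurableEmbedding (f := f) (s := Set.Ioi (0:ℝ))).mpr hf
  have hs : (fun a : ℝ => 1 + a) ⁻¹' Set.Ioi (0:ℝ) = Set.Ioi (-1:ℝ) := by
    ext a; simp [neg_lt]
  simpa [hs, Function.comp_def] using h

lemma gamma_intble {s r : ℝ} (hs : 0 < s) (hr : 0 < r) :
    IntegrableOn (fun z : ℝ => z ^ (s-1) * Real.exp (-(r*z))) (Set.Ioi (0:ℝ)) := by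
  have h := integrableOn_rpow_mul_exp_neg_mul_rpow (p := 1) (s := s-1) (b := r)
    (by linarith) zero_lt_one hr
  refine h.congr_fun (fun z hz => ?_) measurableSet_Ioi
  beta_reduce; rw [Real.rpow_one]; ring_nf

/-- MFC consistency condition for the explicit decoupled Iq-function of the non-LQ
jump-control example:
`∫_{−1}^{∞} (q(a) − γ log p(a)) p(a) da = 0`, where `p` is the density of the shifted Gamma
optimal policy `Gamma(α, β) − 1` and `m = (γα/(r₀−γ+γα) − 1)μ̄` is the evaluated population
term. -/
theorem mfc_consistency_condition (η γ r₀ t T x μbar : ℝ)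
    (hη : 0 < η) (hγ : 0 < γ) (hr : γ ≤ r₀) (hx : 0 < x) (hμ : 0 < μbar)
    (α β m : ℝ)
    (hα : α = ((γ + η) / γ) * Real.exp (η * (t - T)))
    (hβ : β = (r₀ - γ + γ * α) * x / (γ * μbar))
    (hm : m = (γ * α / (r₀ - γ + γ * α) - 1) * μbar)
    (p q : ℝ → ℝ)
    (hp : ∀ a, p a = β ^ α / Real.Gamma α * (1 + a) ^ (α - 1) * Real.exp (-β * (1 + a)))
    (hq : ∀ a, q a = γ * α * (Real.log x - Real.log μbar)
        + (γ * α - γ) * Real.log (1 + a) - r₀ * (x / μbar) * (1 + a)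
        - ((γ * α - γ) / μbar) * m - (1 + Real.log γ) * (γ * α) + γ
        - γ * Real.log (Real.Gamma α) + γ * α * Real.log (γ * α + r₀ - γ)) :
    ∫ a in Set.Ioi (-1 : ℝ), (q a - γ * Real.log (p a)) * p a = 0 := by
  have hα0 : 0 < α := by rw [hα]; positivity
  have hK : 0 < r₀ - γ + γ * α := by nlinarith [mul_pos hγ hα0]
  have hβ0 : 0 < β := by rw [hβ]; exact div_pos (mul_pos hK hx) (mul_pos hγ hμ)
  have hΓ : 0 < Real.Gamma α := Real.Gamma_pos_of_pos hα0
  set c : ℝ := β ^ α / Real.Gamma α with hc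
  have hc0 : 0 < c := by positivity
  -- pointwise rewriting of p
  have e1 : ∀ a : ℝ, p a = (fun z => c * (z ^ (α-1) * Real.exp (-(β*z)))) (1+a) := by
    intro a; rw [hp, neg_mul, mul_assoc]
  have e2 : ∀ a ∈ Set.Ioi (-1:ℝ),
      (1+a) * p a = (fun z => c * (z ^ (α+1-1) * Real.exp (-(β*z)))) (1+a) := by
    intro a ha
    have h1a : (0:ℝ) < 1 + a := by have := Set.mem_Ioi.mp ha; linarith
    simp only [hp, add_sub_cancel_right]
    rw [show (1+a) ^ α = (1+a) ^ (α-1) * (1+a) from by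
      rw [← Real.rpow_add_one h1a.ne' (α-1)]; ring_nf]
    rw [neg_mul]; ring
  -- the two moment integrals
  have I0 : ∫ a in Set.Ioi (-1:ℝ), p a = 1 := by
    calc ∫ a in Set.Ioi (-1:ℝ), p a
        = ∫ a in Set.Ioi (-1:ℝ), (fun z => c * (z ^ (α-1) * Real.exp (-(β*z)))) (1+a) := by
          simp only [← e1]
      _ = ∫ z in Set.Ioi (0:ℝ), c * (z ^ (α-1) * Real.exp (-(β*z))) :=
          shift_Ioi (fun z => c * (z ^ (α-1) * Real.exp (-(β*z))))
      _ = c * ((1/β) ^ α * Real.Gamma α) := by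
          rw [integral_const_mul, integral_rpow_mul_exp_neg_mul_Ioi hα0 hβ0]
      _ = 1 := by
          rw [hc, one_div, Real.inv_rpow hβ0.le]
          field_simp
  have I1 : ∫ a in Set.Ioi (-1:ℝ), (1+a) * p a = α / β := by
    calc ∫ a in Set.Ioi (-1:ℝ), (1+a) * p a
        = ∫ a in Set.Ioi (-1:ℝ), (fun z => c * (z ^ (α+1-1) * Real.exp (-(β*z)))) (1+a) :=
          setIntegral_congr_fun measurableSet_Ioi e2
      _ = ∫ z in Set.Ioi (0:ℝ), c * (z ^ (α+1-1) * Real.exp (-(β*z))) :=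
          shift_Ioi (fun z => c * (z ^ (α+1-1) * Real.exp (-(β*z))))
      _ = c * ((1/β) ^ (α+1) * Real.Gamma (α+1)) := by
          rw [integral_const_mul, integral_rpow_mul_exp_neg_mul_Ioi (by linarith) hβ0]
      _ = α / β := by
          rw [hc, Real.Gamma_add_one hα0.ne', one_div, Real.inv_rpow hβ0.le,
            Real.rpow_add hβ0 α 1, Real.rpow_one]
          field_simp
  -- integrability
  have Ip : IntegrableOn p (Set.Ioi (-1:ℝ)) := by
    have h := shift_intble _ ((gamma_intble hα0 hβ0).const_mul c)
    exact h.congr_fun (fun a _ => (e1 a).symm) measurableSet_Ioi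
  have Ig : IntegrableOn (fun a => (1+a) * p a) (Set.Ioi (-1:ℝ)) := by
    have h := shift_intble _ ((gamma_intble (by linarith : (0:ℝ) < α+1) hβ0).const_mul c)
    exact h.congr_fun (fun a ha => (e2 a ha).symm) measurableSet_Ioi
  -- log of p
  have hlogp : ∀ a ∈ Set.Ioi (-1:ℝ), Real.log (p a)
      = α * Real.log β - Real.log (Real.Gamma α) + (α-1) * Real.log (1+a) + (-β*(1+a)) := by
    intro a ha
    have h1a : (0:ℝ) < 1 + a := by have := Set.mem_Ioi.mp ha; linarith
    rw [hp, Real.log_mul (by positivity) (Real.exp_pos _).ne',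
      Real.log_mul (by positivity) (Real.rpow_pos_of_pos h1a _).ne',
      Real.log_div (by positivity) hΓ.ne', Real.log_rpow hβ0, Real.log_rpow h1a, Real.log_exp]
  set C₀ : ℝ := γ*α*(Real.log x - Real.log μbar) - ((γ*α-γ)/μbar)*m - (1+Real.log γ)*(γ*α)
    + γ - γ*α*Real.log β + γ*α*Real.log (γ*α+r₀-γ) with hC₀
  set C₁ : ℝ := γ*β - r₀*(x/μbar) with hC₁
  have key : Set.EqOn (fun a => (q a - γ * Real.log (p a)) * p a)
      (fun a => C₀ * p a + C₁ * ((1+a) * p a)) (Set.Ioi (-1:ℝ)) := by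
    intro a ha
    simp only
    rw [hq, hlogp a ha, hC₀, hC₁]
    ring
  rw [setIntegral_congr_fun measurableSet_Ioi key,
    integral_add (Ip.const_mul C₀) (Ig.const_mul C₁), integral_const_mul, integral_const_mul,
    I0, I1]
  have hlogβ : Real.log β
      = Real.log (r₀ - γ + γ*α) + Real.log x - Real.log γ - Real.log μbar := by
    rw [hβ, Real.log_div (by positivity) (by positivity), Real.log_mul hK.ne' hx.ne',
      Real.log_mul hγ.ne' hμ.ne']
    ring
  rw [hC₀, hC₁, hm, hlogβ, hβ, show γ*α+r₀-γ = r₀-γ+γ*α from by ring]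
  field_simp
  ring
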